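/- arXiv:2506.16864 — 3 statements merged into one kernel-verified Lean document; each statement's English description precedes it below -/
import Mathlib

section
/- Let A and B be connected simple graphs, let f : V(A) → V(B) be a function, let a', a'' be vertices of A and b', b'' vertices of B. For every path in A from a' to a'' with vertex sequence a' = u₀, u₁, …, u_{m−1}, u_m = a'' (m ≥ 0), there exists a path P in the Sierpiński product A ⊗_f B from (a',b') to (a'',b'') such that the first coordinate of every vertex of P belongs to {u₀, u₁, …, u_m}. -/
/-- The Sierpiński product of simple graphs `A` and `B` with respect to `f : V(A) → V(B)`:
vertices are pairs `(a, b)`; two vertices are adjacent iff they lie in the same fibre and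
their second coordinates are adjacent in `B`, or their first coordinates are adjacent in `A`
and the second coordinates are given by `f` applied to the other first coordinate. -/
def SierpinskiProd {α β : Type*} (A : SimpleGraph α) (B : SimpleGraph β)
    (f : α → β) : SimpleGraph (α × β) where
  Adj p q := (p.1 = q.1 ∧ B.Adj p.2 q.2) ∨
    (A.Adj p.1 q.1 ∧ p.2 = f q.1 ∧ q.2 = f p.1)
  symm := by
    constructor
    rintro ⟨a₁, b₁⟩ ⟨a₂, b₂⟩ (⟨h, hB⟩ | ⟨hA, h₁, h₂⟩)
    · exact Or.inl ⟨h.symm, hB.symm⟩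
    · exact Or.inr ⟨hA.symm, h₂, h₁⟩
  loopless := by
    constructor
    rintro ⟨a, b⟩ (⟨_, hB⟩ | ⟨hA, _, _⟩)
    · exact B.ne_of_adj hB rfl
    · exact A.ne_of_adj hA rfl

/-- A vertex `v` of a graph `G` is a separating vertex if deleting `v` (taking the induced
subgraph on the remaining vertices) yields a graph that is not connected. -/
def IsSeparatingVertex {V : Type*} (G : SimpleGraph V) (v : V) : Prop :=
  ¬ (G.induce ({v}ᶜ : Set V)).Connected

/-- A graph `G` is `k`-connected if it has more than `k` vertices and deleting any set of
fewer than `k` vertices leaves a connected graph. -/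
def KConnected {V : Type*} [Fintype V] (k : ℕ) (G : SimpleGraph V) : Prop :=
  k < Fintype.card V ∧ ∀ S : Set V, S.ncard < k → (G.induce Sᶜ).Connected

/-- `W` is a cut-set of `G` if deleting all vertices of `W` strictly increases the number of
connected components. -/
def IsCutSet {V : Type*} (G : SimpleGraph V) (W : Set V) : Prop :=
  Nat.card G.ConnectedComponent < Nat.card (G.induce Wᶜ).ConnectedComponent

/-- `W` is a minimal cut-set of `G` if it is a cut-set and no proper subset is a cut-set. -/
def IsMinCutSet {V : Type*} (G : SimpleGraph V) (W : Set V) : Prop :=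
  IsCutSet G W ∧ ∀ W' ⊂ W, ¬ IsCutSet G W'

open SimpleGraph in
/-- The embedding of `B` into the fibre over `a` of the Sierpiński product. -/
def fibreHom {α β : Type*} (A : SimpleGraph α) (B : SimpleGraph β) (f : α → β) (a : α) :
    B →g SierpinskiProd A B f where
  toFun b := (a, b)
  map_rel' h := Or.inl ⟨rfl, h⟩

lemma fibreHom_injective {α β : Type*} (A : SimpleGraph α) (B : SimpleGraph β)
    (f : α → β) (a : α) : Function.Injective (fibreHom A B f a) := by
  intro x y h
  exact (Prod.mk.injEq _ _ _ _ ▸ congrArg id h).2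

/-- **Lemma.** Given a path in `A` from `a'` to `a''`, there is a path in `A ⊗_f B` from
`(a', b')` to `(a'', b'')` all of whose vertices have first coordinate among the vertices
of the given path. -/
theorem sierpinski_path_lift {α β : Type*} [Fintype α] [Fintype β]
    (A : SimpleGraph α) (B : SimpleGraph β) (f : α → β)
    (hA : A.Connected) (hB : B.Connected)
    (a' a'' : α) (b' b'' : β) (w : A.Walk a' a'') (hw : w.IsPath) :
    ∃ P : (SierpinskiProd A B f).Walk (a', b') (a'', b''),
      P.IsPath ∧ ∀ v ∈ P.support, v.1 ∈ w.support := by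
  classical
  induction w generalizing b' with
  | nil =>
    obtain ⟨q⟩ := hB.preconnected b' b''
    refine ⟨q.toPath.val.map (fibreHom A B f _),
      SimpleGraph.Walk.map_isPath_of_injective (fibreHom_injective A B f _) q.toPath.2, ?_⟩
    intro v hv
    erw [SimpleGraph.Walk.support_map, List.mem_map] at hv
    obtain ⟨b, -, rfl⟩ := hv
    exact List.mem_singleton.mpr rfl
  | @cons a₀ c a₁ h p ih =>
    rw [SimpleGraph.Walk.cons_isPath_iff] at hw
    obtain ⟨P₂, hP₂, hsup₂⟩ := ih (f a₀) hw.1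
    obtain ⟨q⟩ := hB.preconnected b' (f c)
    set q₁ := q.toPath with hq₁
    have he : (SierpinskiProd A B f).Adj (fibreHom A B f a₀ (f c)) (c, f a₀) := Or.inr ⟨h, rfl, rfl⟩
    refine ⟨(q₁.val.map (fibreHom A B f a₀)).append (SimpleGraph.Walk.cons he P₂), ?_, ?_⟩
    · erw [SimpleGraph.Walk.isPath_def, SimpleGraph.Walk.support_append]
      have h1 : (q₁.val.map (fibreHom A B f a₀)).support.Nodup :=
        (SimpleGraph.Walk.map_isPath_of_injective (fibreHom_injective A B f a₀) q₁.2).support_nodup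
      have h2 : ((SimpleGraph.Walk.cons he P₂).support.tail) = P₂.support := by
        simp [SimpleGraph.Walk.support_cons]
      rw [h2]
      refine List.Nodup.append h1 hP₂.support_nodup ?_
      intro v hv1 hv2
      erw [SimpleGraph.Walk.support_map, List.mem_map] at hv1
      obtain ⟨b, -, rfl⟩ := hv1
      exact hw.2 (hsup₂ _ hv2)
    · intro v hv
      erw [SimpleGraph.Walk.support_append] at hv
      simp only [SimpleGraph.Walk.support_cons, List.tail_cons] at hv
      rcases List.mem_append.mp hv with hv | hv
      · erw [SimpleGraph.Walk.support_map, List.mem_map] at hv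
        obtain ⟨b, -, rfl⟩ := hv
        rw [SimpleGraph.Walk.support_cons]
        exact List.mem_cons_self
      · rw [SimpleGraph.Walk.support_cons]
        exact List.mem_cons_of_mem _ (hsup₂ _ hv)
end

section
/- Let A and B be connected simple graphs with A having at least two vertices and B having at least three vertices, and let f : V(A) → V(B) be a function such that the Sierpiński product A ⊗_f B is 3-connected. Then every vertex of A has degree at least 3 in A. -/
/-- **Lemma.** If `A ⊗_f B` is `3`-connected, with `A` connected on at least two vertices
and `B` connected on at least three vertices, then every vertex of `A` has degree at
least `3`. -/
theorem sierpinski_three_connected_min_degree {α β : Type*} [Fintype α] [Fintype β]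
    (A : SimpleGraph α) (B : SimpleGraph β) (f : α → β)
    (hA : A.Connected) (hB : B.Connected)
    (hcardA : 2 ≤ Fintype.card α) (hcardB : 3 ≤ Fintype.card β)
    (h3 : KConnected 3 (SierpinskiProd A B f)) :
    ∀ a : α, 3 ≤ (A.neighborSet a).ncard := by
  intro a
  by_contra hdeg
  push_neg at hdeg
  set S : Set (α × β) := {p | p.1 = a ∧ p.2 ∈ f '' A.neighborSet a} with hS
  -- S has small cardinality
  have hSimg : S = (fun b => (a, b)) '' (f '' A.neighborSet a) := by
    ext ⟨x, y⟩
    simp only [hS, Set.mem_setOf_eq, Set.mem_image]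
    constructor
    · rintro ⟨rfl, hb⟩; exact ⟨y, hb, rfl⟩
    · rintro ⟨b, hb, h⟩
      obtain ⟨h1, h2⟩ := Prod.mk.injEq .. ▸ h
      exact ⟨h1.symm, h2 ▸ hb⟩
  have hfin : (A.neighborSet a).Finite := Set.toFinite _
  have hSsmall : S.ncard < 3 := by
    rw [hSimg]
    calc ((fun b => (a, b)) '' (f '' A.neighborSet a)).ncard
        ≤ (f '' A.neighborSet a).ncard := Set.ncard_image_le (hfin.image f)
      _ ≤ (A.neighborSet a).ncard := Set.ncard_image_le hfin
      _ < 3 := hdeg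
  have hconn := h3.2 S hSsmall
  -- pick b0 ∉ f '' N(a)
  have himg : (f '' A.neighborSet a).ncard < Fintype.card β := by
    calc (f '' A.neighborSet a).ncard ≤ (A.neighborSet a).ncard := Set.ncard_image_le hfin
      _ < 3 := hdeg
      _ ≤ Fintype.card β := hcardB
  obtain ⟨b0, hb0⟩ : ∃ b0 : β, b0 ∉ f '' A.neighborSet a := by
    by_contra hall
    push_neg at hall
    have : (f '' A.neighborSet a) = Set.univ := Set.eq_univ_of_forall hall
    rw [this, Set.ncard_univ, Nat.card_eq_fintype_card] at himg
    omega
  -- pick a1 ≠ a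
  obtain ⟨a1, ha1⟩ : ∃ a1 : α, a1 ≠ a := by
    by_contra hall
    push_neg at hall
    have : Fintype.card α ≤ 1 := Fintype.card_le_one_iff.2 fun x y => (hall x).trans (hall y).symm
    omega
  have hbne : Nonempty β := Fintype.card_pos_iff.1 (by omega)
  obtain ⟨b1⟩ := hbne
  have hx : ((a, b0) : α × β) ∈ Sᶜ := by
    intro h; exact hb0 h.2
  have hy : ((a1, b1) : α × β) ∈ Sᶜ := by
    intro h; exact ha1 h.1
  -- walks in the induced graph from the a-fibre stay in the a-fibre
  have key : ∀ {u v : ↥(Sᶜ)}, ((SierpinskiProd A B f).induce Sᶜ).Walk u v →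
      (u : α × β).1 = a → (v : α × β).1 = a := by
    intro u v w
    induction w with
    | nil => exact id
    | @cons u u' v h _ ih =>
      intro hu
      apply ih
      rcases h with ⟨heq, _⟩ | ⟨hAdj, h1, _⟩
      · exact heq ▸ hu
      · exfalso
        simp only [Function.Embedding.coe_subtype] at hAdj h1
        exact u.2 ⟨hu, (u' : α × β).1, by rwa [hu] at hAdj, h1.symm⟩
  obtain ⟨w⟩ := hconn.preconnected ⟨(a, b0), hx⟩ ⟨(a1, b1), hy⟩
  exact ha1 (key w rfl)
end

section
/- Let A and B be connected simple graphs, each with at least two vertices, and let f : V(A) → V(B) be the constant function with value b ∈ V(B). Then for every vertex a of A, the vertex (a,b) is a separating vertex of the Sierpiński product A ⊗_f B. In particular, if A ⊗_f B is 2-connected (with A, B connected and each having at least two vertices), then the image of f has at least 2 elements. -/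
private lemma sep_aux' {α β : Type*} [Fintype α] [Fintype β]
    (A : SimpleGraph α) (B : SimpleGraph β)
    (hcardA : 2 ≤ Fintype.card α) (hcardB : 2 ≤ Fintype.card β) (b : β) (a : α) :
    IsSeparatingVertex (SierpinskiProd A B (fun _ => b)) (a, b) := by
  obtain ⟨a', ha'⟩ := Fintype.exists_ne_of_one_lt_card (by omega) a
  obtain ⟨b', hb'⟩ := Fintype.exists_ne_of_one_lt_card (by omega) b
  intro hc
  set G := SierpinskiProd A B (fun _ => b)
  have key : ∀ (p q : ({((a : α), b)}ᶜ : Set (α × β))),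
      (G.induce _).Reachable p q → p.val.1 = a → q.val.1 = a := by
    intro p q hr
    obtain ⟨w⟩ := hr
    induction w with
    | nil => exact fun h => h
    | @cons x y z h w ih =>
      intro hp
      apply ih
      have hadj : G.Adj x.val y.val := h
      rcases hadj with ⟨h1, _⟩ | ⟨_, h2, _⟩
      · exact h1 ▸ hp
      · exfalso
        apply x.property
        simp only [Set.mem_singleton_iff]
        exact Prod.ext hp h2
  have hu : ((a, b') : α × β) ∈ ({((a : α), b)}ᶜ : Set (α × β)) := by
    simp [Prod.ext_iff, hb']
  have hv : ((a', b) : α × β) ∈ ({((a : α), b)}ᶜ : Set (α × β)) := by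
    simp [Prod.ext_iff, ha']
  exact ha' (key ⟨(a, b'), hu⟩ ⟨(a', b), hv⟩ (hc.preconnected _ _) rfl)

/-- **Lemma.** If `f` is the constant function with value `b`, then every vertex `(a, b)` is
a separating vertex of `A ⊗_f B`; consequently, if a Sierpiński product `A ⊗_g B` of
connected nontrivial graphs is `2`-connected, the image of `g` has at least two elements. -/
theorem sierpinski_constant_separating {α β : Type*} [Fintype α] [Fintype β]
    (A : SimpleGraph α) (B : SimpleGraph β)
    (hA : A.Connected) (hB : B.Connected)
    (hcardA : 2 ≤ Fintype.card α) (hcardB : 2 ≤ Fintype.card β) (b : β) :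
    (∀ a : α, IsSeparatingVertex (SierpinskiProd A B (fun _ => b)) (a, b)) ∧
    (∀ g : α → β, KConnected 2 (SierpinskiProd A B g) → 2 ≤ (Set.range g).ncard) := by
  constructor
  · exact fun a => sep_aux' A B hcardA hcardB b a
  · intro g hk
    by_contra h
    push_neg at h
    have hne : (Set.range g).Nonempty := by
      have : Nonempty α := Fintype.card_pos_iff.mp (by omega)
      exact Set.range_nonempty g
    have hfin : (Set.range g).Finite := Set.toFinite _
    have h1 : (Set.range g).ncard = 1 := by
      have := (Set.ncard_pos hfin).mpr hne
      omega
    obtain ⟨b₀, hb₀⟩ := Set.ncard_eq_one.mp h1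
    have hg : g = fun _ => b₀ := by
      funext x
      have : g x ∈ Set.range g := Set.mem_range_self x
      rw [hb₀] at this
      exact this
    obtain ⟨a₀⟩ : Nonempty α := Fintype.card_pos_iff.mp (by omega)
    have hsep := sep_aux' A B hcardA hcardB b₀ a₀
    apply hsep
    have := hk.2 {(a₀, b₀)} (by simp)
    rw [hg] at this
    exact this
end
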